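/- arXiv:1103.2511 — 3 statements merged into one kernel-verified Lean document; each statement's English description precedes it below -/
import Mathlib

section
/- Let A →(β) B →(θ) C be an exact sequence of complexes such that C/Im(θ) is an 𝒳-complex. Then for every 𝒳-injective complex I, the induced sequence Hom(C,I) → Hom(B,I) → Hom(A,I) of chain-map groups is exact. -/
open CategoryTheory CategoryTheory.Limits

/-- The category of cochain complexes of `R`-modules indexed by `ℤ`. -/
abbrev Cx (R : Type) [Ring R] := CochainComplex (ModuleCat.{0} R) ℤ

variable {R : Type} [Ring R]

/-- `C` is an `𝒳`-complex: every component lies in the class `𝒳`. -/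
def IsXCx (𝒳 : Set (ModuleCat.{0} R)) (C : Cx R) : Prop := ∀ n : ℤ, C.X n ∈ 𝒳

/-- `P` is an `𝒳`-projective module: maps from `P` lift along surjections with kernel in `𝒳`. -/
def XProjMod (𝒳 : Set (ModuleCat.{0} R)) (P : ModuleCat.{0} R) : Prop :=
  ∀ (A B : ModuleCat.{0} R) (p : A ⟶ B), Function.Surjective p →
    ModuleCat.of R (LinearMap.ker p.hom) ∈ 𝒳 →
    ∀ h : P ⟶ B, ∃ g : P ⟶ A, g ≫ p = h

/-- `E` is an `𝒳`-injective module: maps into `E` extend along injections with cokernel in `𝒳`. -/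
def XInjMod (𝒳 : Set (ModuleCat.{0} R)) (E : ModuleCat.{0} R) : Prop :=
  ∀ (A B : ModuleCat.{0} R) (i : A ⟶ B), Function.Injective i →
    ModuleCat.of R (↥B ⧸ LinearMap.range i.hom) ∈ 𝒳 →
    ∀ f : A ⟶ E, ∃ g : B ⟶ E, i ≫ g = f

/-- `C` is an `𝒳`-projective complex: chain maps from `C` lift along surjective chain maps
whose kernel complex has all components in `𝒳`. -/
def XProjCx (𝒳 : Set (ModuleCat.{0} R)) (C : Cx R) : Prop :=
  ∀ (A B : Cx R) (φ : A ⟶ B), (∀ n, Function.Surjective (φ.f n)) →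
    (∀ n, ModuleCat.of R (LinearMap.ker (φ.f n).hom) ∈ 𝒳) →
    ∀ f : C ⟶ B, ∃ h : C ⟶ A, h ≫ φ = f

/-- `C` is an `𝒳`-injective complex: chain maps into `C` extend along injective chain maps
whose cokernel complex has all components in `𝒳`. -/
def XInjCx (𝒳 : Set (ModuleCat.{0} R)) (C : Cx R) : Prop :=
  ∀ (A B : Cx R) (φ : A ⟶ B), (∀ n, Function.Injective (φ.f n)) →
    (∀ n, ModuleCat.of R (↥(B.X n) ⧸ LinearMap.range (φ.f n).hom) ∈ 𝒳) →
    ∀ f : A ⟶ C, ∃ g : B ⟶ C, φ ≫ g = f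

/-- The complex `... → 0 → A →(f) B → 0 → ...` with `A` in degree 0 and `B` in degree 1. -/
noncomputable def DblMap {A B : ModuleCat.{0} R} (f : A ⟶ B) : Cx R where
  X n := if n = 0 then A else if n = 1 then B else ModuleCat.of R PUnit
  d i j :=
    if h : i = 0 ∧ j = 1 then
      eqToHom (by rw [h.1]; simp) ≫ f ≫ eqToHom (by rw [h.2]; simp)
    else 0
  shape i j hij := by
    rw [dif_neg]
    rintro ⟨rfl, rfl⟩
    exact hij rfl
  d_comp_d' i j k _ _ := by
    by_cases h : i = 0 ∧ j = 1
    · obtain ⟨rfl, rfl⟩ := h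
      rw [dif_neg (show ¬((1:ℤ) = 0 ∧ k = 1) by omega), comp_zero]
    · rw [dif_neg h, zero_comp]

/-- The complex `... → 0 → P →(id) P → 0 → ...` (`P` in degrees 0 and 1, identity differential). -/
noncomputable def Dbl (P : ModuleCat.{0} R) : Cx R := DblMap (𝟙 P)

/-- Membership in `ε₁`: exact complexes all of whose kernels lie in `𝒳`. -/
def Eps1 (𝒳 : Set (ModuleCat.{0} R)) (E : Cx R) : Prop :=
  (∀ n : ℤ, E.ExactAt n) ∧ ∀ n : ℤ, ModuleCat.of R (LinearMap.ker (E.d n (n+1)).hom) ∈ 𝒳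

/-- `Ext¹(A, C) = 0` in the category of complexes: every short exact sequence
`0 → C → W → A → 0` of complexes splits. -/
def Ext1IsZero (A C : Cx R) : Prop :=
  ∀ (W : Cx R) (i : C ⟶ W) (p : W ⟶ A),
    (∀ n, Function.Injective (i.f n)) → (∀ n, Function.Surjective (p.f n)) →
    (∀ n, LinearMap.range (i.f n).hom = LinearMap.ker (p.f n).hom) →
    ∃ r : W ⟶ C, i ≫ r = 𝟙 C

/-- A complex is bounded if its components vanish outside finitely many degrees. -/
def Bounded (C : Cx R) : Prop := ∃ a b : ℤ, ∀ n : ℤ, (n < a ∨ b < n) → Limits.IsZero (C.X n)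

lemma comm_all {B C : Cx R} (θ : B ⟶ C) (i j : ℤ) :
    θ.f i ≫ C.d i j = B.d i j ≫ θ.f j := by
  by_cases h : (ComplexShape.up ℤ).Rel i j
  · exact θ.comm' i j h
  · rw [B.shape i j h, C.shape i j h, comp_zero, zero_comp]

lemma comm_all_apply {B C : Cx R} (θ : B ⟶ C) (i j : ℤ) (a : B.X i) :
    C.d i j (θ.f i a) = θ.f j (B.d i j a) :=
  LinearMap.congr_fun (congrArg ModuleCat.Hom.hom (comm_all θ i j)) a

lemma d_d_apply (C : Cx R) (i j k : ℤ) (x : C.X i) :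
    C.d j k (C.d i j x) = 0 :=
  LinearMap.congr_fun (congrArg ModuleCat.Hom.hom (C.d_comp_d i j k)) x

noncomputable def ImCx {B C : Cx R} (θ : B ⟶ C) : Cx R where
  X n := ModuleCat.of R (LinearMap.range (θ.f n).hom)
  d i j := ModuleCat.ofHom <| LinearMap.restrict (C.d i j).hom (p := LinearMap.range (θ.f i).hom)
      (q := LinearMap.range (θ.f j).hom) (by
    rintro x ⟨a, rfl⟩
    exact ⟨B.d i j a, (comm_all_apply θ i j a).symm⟩)
  shape i j h := by
    refine ModuleCat.hom_ext (LinearMap.ext fun x => Subtype.ext ?_)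
    have : C.d i j = 0 := C.shape i j h
    simp [LinearMap.restrict_apply, this]
  d_comp_d' i j k _ _ := by
    refine ModuleCat.hom_ext (LinearMap.ext fun x => Subtype.ext ?_)
    show C.d j k (C.d i j x.1) = 0
    exact d_d_apply C i j k x.1

noncomputable def toImCx {B C : Cx R} (θ : B ⟶ C) : B ⟶ ImCx θ where
  f n := ModuleCat.ofHom <| LinearMap.codRestrict (LinearMap.range (θ.f n).hom) (θ.f n).hom
      (fun x => LinearMap.mem_range_self _ x)
  comm' i j _ := by
    refine ModuleCat.hom_ext (LinearMap.ext fun x => Subtype.ext ?_)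
    show C.d i j (θ.f i x) = θ.f j (B.d i j x)
    exact comm_all_apply θ i j x

noncomputable def fromImCx {B C : Cx R} (θ : B ⟶ C) : ImCx θ ⟶ C where
  f n := ModuleCat.ofHom (LinearMap.range (θ.f n).hom).subtype
  comm' i j _ := by
    refine ModuleCat.hom_ext (LinearMap.ext fun x => ?_)
    show C.d i j x.1 = (C.d i j x.1 : C.X j)
    rfl



/-- If `A →(β) B →(θ) C` is exact with `C/Im θ` an `𝒳`-complex, then for every
`𝒳`-injective complex `I` the sequence `Hom(C,I) → Hom(B,I) → Hom(A,I)` is exact. -/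
theorem stmt4 (𝒳 : Set (ModuleCat.{0} R)) (A B C : Cx R) (β : A ⟶ B) (θ : B ⟶ C)
    (hexact : ∀ n, LinearMap.range (β.f n).hom = LinearMap.ker (θ.f n).hom)
    (hcoker : ∀ n, ModuleCat.of R (↥(C.X n) ⧸ LinearMap.range (θ.f n).hom) ∈ 𝒳)
    (I : Cx R) (hI : XInjCx 𝒳 I) :
    ∀ u : B ⟶ I, β ≫ u = 0 ↔ ∃ v : C ⟶ I, θ ≫ v = u := by
  intro u
  constructor
  · intro hu
    have hucomp : ∀ n (a : A.X n), u.f n (β.f n a) = 0 := by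
      intro n a
      have h := congrArg (fun g => HomologicalComplex.Hom.f g n) hu
      simp only [HomologicalComplex.comp_f, HomologicalComplex.zero_f] at h
      exact LinearMap.congr_fun (congrArg ModuleCat.Hom.hom h) a
    have hker : ∀ n, LinearMap.ker (θ.f n).hom ≤ LinearMap.ker (u.f n).hom := by
      intro n x hx
      rw [← hexact n] at hx
      obtain ⟨a, rfl⟩ := hx
      exact hucomp n a
    set wn : ∀ n, (ImCx θ).X n ⟶ I.X n := fun n =>
      ModuleCat.ofHom <| LinearMap.comp ((LinearMap.ker (θ.f n).hom).liftQ (u.f n).hom (hker n))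
        (LinearMap.quotKerEquivRange (θ.f n).hom).symm.toLinearMap with hwn
    have key : ∀ n (x : B.X n), wn n ((toImCx θ).f n x) = u.f n x := by
      intro n x
      have h1 : (toImCx θ).f n x =
          LinearMap.quotKerEquivRange (θ.f n).hom (Submodule.Quotient.mk x) := by
        apply Subtype.ext
        exact (LinearMap.quotKerEquivRange_apply_mk (θ.f n).hom x).symm
      rw [hwn]
      show ((LinearMap.ker (θ.f n).hom).liftQ (u.f n).hom (hker n))
          ((LinearMap.quotKerEquivRange (θ.f n).hom).symm
            ((toImCx θ).f n x)) = u.f n x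
      rw [h1, LinearEquiv.symm_apply_apply, Submodule.liftQ_apply]
    have hsurj : ∀ n, Function.Surjective ((toImCx θ).f n) := by
      rintro n ⟨y, x, hx⟩
      exact ⟨x, Subtype.ext hx⟩
    set w : ImCx θ ⟶ I :=
      { f := wn
        comm' := by
          intro i j _
          refine ModuleCat.hom_ext (LinearMap.ext fun y => ?_)
          obtain ⟨x, rfl⟩ := hsurj i y
          show I.d i j (wn i ((toImCx θ).f i x)) = wn j ((ImCx θ).d i j ((toImCx θ).f i x))
          rw [comm_all_apply (toImCx θ) i j x, key, key, ← comm_all_apply u i j x] } with hw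
    obtain ⟨v, hv⟩ := hI (ImCx θ) C (fromImCx θ)
      (fun n => Subtype.coe_injective)
      (by
        intro n
        have h3 : LinearMap.range ((fromImCx θ).f n).hom = LinearMap.range (θ.f n).hom :=
          Submodule.range_subtype _
        rw [h3]
        exact hcoker n) w
    refine ⟨v, ?_⟩
    ext n x
    have h := congrArg (fun g => HomologicalComplex.Hom.f g n) hv
    simp only [HomologicalComplex.comp_f] at h
    have h2 := LinearMap.congr_fun
      (congrArg ModuleCat.Hom.hom h) ((toImCx θ).f n x)
    show v.f n (θ.f n x) = u.f n x
    rw [← key n x, ← h2]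
    rfl
  · rintro ⟨v, rfl⟩
    ext n x
    have hx : θ.f n (β.f n x) = 0 := by
      have : β.f n x ∈ LinearMap.ker (θ.f n).hom := by
        rw [← hexact n]; exact LinearMap.mem_range_self _ x
      exact this
    show v.f n (θ.f n (β.f n x)) = 0
    rw [hx, map_zero]
end

section
/- If X : ... → X_{n+1} → X_n → X_{n-1} → ... is an 𝒳-injective complex, then each component module X_n is an 𝒳-injective R-module. -/
open CategoryTheory CategoryTheory.Limits

variable {R : Type} [Ring R]

namespace Stmt5Proof

variable (X : Cx R) (n : ℤ) {A B : ModuleCat.{0} R} (i : A ⟶ B) (f : A ⟶ X.X n)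

/-- `a ↦ (u a, -(v a))`. -/
noncomputable def antiDiag {M N P : Type} [AddCommGroup M] [AddCommGroup N] [AddCommGroup P]
    [Module R M] [Module R N] [Module R P] (u : M →ₗ[R] N) (v : M →ₗ[R] P) :
    M →ₗ[R] (N × P) where
  toFun a := (u a, -(v a))
  map_add' a b := by simp [Prod.ext_iff]; abel
  map_smul' r a := by simp [Prod.ext_iff]

@[simp] lemma antiDiag_apply {M N P : Type} [AddCommGroup M] [AddCommGroup N] [AddCommGroup P]
    [Module R M] [Module R N] [Module R P] (u : M →ₗ[R] N) (v : M →ₗ[R] P) (a : M) :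
    antiDiag u v a = (u a, -(v a)) := rfl

/-- relation submodule for the pushout `E = (X n ⊕ B)/⟨(f a, -i a)⟩`. -/
noncomputable def relE : Submodule R (↥(X.X n) × ↥B) :=
  LinearMap.range (antiDiag f.hom i.hom)

noncomputable def Em : ModuleCat.{0} R := ModuleCat.of R ((↥(X.X n) × ↥B) ⧸ relE X n i f)

noncomputable def iE : ↥(X.X n) →ₗ[R] ↥(Em X n i f) :=
  (relE X n i f).mkQ.comp (LinearMap.inl R _ _)

noncomputable def jE : ↥B →ₗ[R] ↥(Em X n i f) :=
  (relE X n i f).mkQ.comp (LinearMap.inr R _ _)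

lemma jE_i (a : ↥A) : jE X n i f (i a) = iE X n i f (f a) := by
  show Submodule.Quotient.mk _ = Submodule.Quotient.mk _
  rw [Submodule.Quotient.eq]
  refine ⟨-a, ?_⟩
  simp [Prod.ext_iff, Prod.sub_def]

lemma iE_inj (hi : Function.Injective i) : Function.Injective (iE X n i f) := by
  rw [← LinearMap.ker_eq_bot]
  rw [eq_bot_iff]
  rintro x hx
  have : ((x, 0) : ↥(X.X n) × ↥B) ∈ relE X n i f := by
    rw [LinearMap.mem_ker] at hx
    exact (Submodule.Quotient.mk_eq_zero _).1 hx
  obtain ⟨a, ha⟩ := this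
  simp only [antiDiag_apply, Prod.mk.injEq] at ha
  obtain ⟨h1, h2⟩ := ha
  have ha0 : a = 0 := by
    apply hi
    simpa using h2.symm
  simp only [Submodule.mem_bot]
  rw [← h1, ha0]
  simp

/-- relation submodule for the pushout `P = (X (n+1) ⊕ E)/⟨(d y, -iE y)⟩`. -/
noncomputable def relP : Submodule R (↥(X.X (n+1)) × ↥(Em X n i f)) :=
  LinearMap.range (antiDiag (X.d n (n+1)).hom (iE X n i f))

noncomputable def Pm : ModuleCat.{0} R :=
  ModuleCat.of R ((↥(X.X (n+1)) × ↥(Em X n i f)) ⧸ relP X n i f)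

noncomputable def iP : ↥(X.X (n+1)) →ₗ[R] ↥(Pm X n i f) :=
  (relP X n i f).mkQ.comp (LinearMap.inl R _ _)

noncomputable def jP : ↥(Em X n i f) →ₗ[R] ↥(Pm X n i f) :=
  (relP X n i f).mkQ.comp (LinearMap.inr R _ _)

lemma jP_iE (y : ↥(X.X n)) :
    jP X n i f (iE X n i f y) = iP X n i f (X.d n (n+1) y) := by
  show Submodule.Quotient.mk _ = Submodule.Quotient.mk _
  rw [Submodule.Quotient.eq]
  refine ⟨-y, ?_⟩
  simp [Prod.ext_iff, Prod.sub_def]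

lemma iP_inj (hi : Function.Injective i) : Function.Injective (iP X n i f) := by
  rw [← LinearMap.ker_eq_bot, eq_bot_iff]
  rintro x hx
  have : ((x, 0) : ↥(X.X (n+1)) × ↥(Em X n i f)) ∈ relP X n i f := by
    rw [LinearMap.mem_ker] at hx
    exact (Submodule.Quotient.mk_eq_zero _).1 hx
  obtain ⟨y, hy⟩ := this
  simp only [antiDiag_apply, Prod.mk.injEq] at hy
  obtain ⟨h1, h2⟩ := hy
  have hy0 : y = 0 := by
    apply iE_inj X n i f hi
    simpa using h2.symm
  simp only [Submodule.mem_bot]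
  rw [← h1, hy0]
  simp

noncomputable def Qm : ModuleCat.{0} R :=
  ModuleCat.of R (↥B ⧸ LinearMap.range i.hom)

noncomputable def Gm (m : ℤ) : ModuleCat.{0} R :=
  ModuleCat.of R (↥(X.X m) × ↥(Qm i))

/-- degree `n → n+1` map `E → P`. -/
noncomputable def dEP : ↥(Em X n i f) →ₗ[R] ↥(Pm X n i f) := jP X n i f

/-- degree `n+1 → m` map `P → X m × Q`, `(x, e) ↦ (d x, 0)`. -/
noncomputable def dPG (m : ℤ) : ↥(Pm X n i f) →ₗ[R] ↥(Gm X i m) :=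
  Submodule.liftQ _ (LinearMap.prod
      ((X.d (n+1) m).hom.comp (LinearMap.fst R _ _)) 0)
    (by
      rintro z ⟨y, rfl⟩
      have h0 : X.d (n+1) m (X.d n (n+1) y) = 0 := LinearMap.congr_fun (ModuleCat.hom_ext_iff.mp (X.d_comp_d n (n+1) m)) y
      show (X.d (n+1) m (X.d n (n+1) y), (0 : ↥(Qm i))) = 0
      rw [h0]
      rfl)

/-- degree `m → n` map `X m × Q → E`, `(x, q) ↦ iE (d x)`. -/
noncomputable def dGE (m : ℤ) : ↥(Gm X i m) →ₗ[R] ↥(Em X n i f) :=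
  (iE X n i f).comp ((X.d m n).hom.comp (LinearMap.fst R _ _))

/-- generic degree map `X m × Q → X (m+1) × Q`, `(x, q) ↦ (d x, 0)`. -/
noncomputable def dGG (m : ℤ) : ↥(Gm X i m) →ₗ[R] ↥(Gm X i (m+1)) :=
  LinearMap.prod
    ((X.d m (m+1)).hom.comp (LinearMap.fst R _ _)) 0

/-- component of the chain map into the generic degrees, `x ↦ (x, 0)`. -/
noncomputable def phiG (m : ℤ) : ↥(X.X m) →ₗ[R] ↥(Gm X i m) :=
  LinearMap.prod LinearMap.id 0

-- composite lemmas (stated as LinearMap.comp equalities)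
lemma L1 (m : ℤ) : (dPG X n i f m).comp (dEP X n i f) = 0 := by
  apply LinearMap.ext
  intro e
  obtain ⟨⟨x, b⟩, rfl⟩ := Submodule.Quotient.mk_surjective _ e
  show (X.d (n+1) m (0 : ↥(X.X (n+1))), (0 : ↥(Qm i))) = 0
  rw [map_zero]
  rfl

lemma L2 (m : ℤ) : (dGG X i m).comp (dPG X n i f m) = 0 := by
  apply LinearMap.ext
  intro e
  obtain ⟨⟨x, em⟩, rfl⟩ := Submodule.Quotient.mk_surjective _ e
  show (X.d m (m+1) (X.d (n+1) m x), (0 : ↥(Qm i))) = 0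
  have h0 : X.d m (m+1) (X.d (n+1) m x) = 0 := LinearMap.congr_fun (ModuleCat.hom_ext_iff.mp (X.d_comp_d (n+1) m (m+1))) x
  rw [h0]
  rfl

lemma L3 (m : ℤ) : (dEP X n i f).comp (dGE X n i f m) = 0 := by
  apply LinearMap.ext
  rintro ⟨x, q⟩
  show jP X n i f (iE X n i f (X.d m n x)) = 0
  rw [jP_iE]
  have h0 : X.d n (n+1) (X.d m n x) = 0 := LinearMap.congr_fun (ModuleCat.hom_ext_iff.mp (X.d_comp_d m n (n+1))) x
  rw [h0]
  simp

lemma L4 (m : ℤ) : (dGE X n i f (m+1)).comp (dGG X i m) = 0 := by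
  apply LinearMap.ext
  rintro ⟨x, q⟩
  show iE X n i f (X.d (m+1) n (X.d m (m+1) x)) = 0
  have h0 : X.d (m+1) n (X.d m (m+1) x) = 0 := LinearMap.congr_fun (ModuleCat.hom_ext_iff.mp (X.d_comp_d m (m+1) n)) x
  rw [h0]
  simp

lemma L5 (m : ℤ) : (dGG X i (m+1)).comp (dGG X i m) = 0 := by
  apply LinearMap.ext
  rintro ⟨x, q⟩
  show ((X.d (m+1) (m+1+1)) ((X.d m (m+1)) x), (0:↥(Qm i))) = 0
  have h0 : X.d (m+1) (m+1+1) (X.d m (m+1) x) = 0 :=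
    LinearMap.congr_fun (ModuleCat.hom_ext_iff.mp (X.d_comp_d m (m+1) (m+1+1))) x
  rw [h0]
  rfl

-- chain map component compatibilities
lemma C1 : (dEP X n i f).comp (iE X n i f) =
    (iP X n i f).comp (X.d n (n+1)).hom := by
  apply LinearMap.ext
  intro y
  exact jP_iE X n i f y

lemma C2 (m : ℤ) : (dPG X n i f m).comp (iP X n i f) =
    (phiG X i m).comp (X.d (n+1) m).hom := by
  apply LinearMap.ext
  intro x
  rfl

lemma C3 (m : ℤ) : (dGE X n i f m).comp (phiG X i m) =
    (iE X n i f).comp (X.d m n).hom := by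
  apply LinearMap.ext
  intro x
  rfl

lemma C4 (m : ℤ) : (dGG X i m).comp (phiG X i m) =
    (phiG X i (m+1)).comp (X.d m (m+1)).hom := by
  apply LinearMap.ext
  intro x
  rfl


-- hom-typed wrappers
noncomputable def dEPh : Em X n i f ⟶ Pm X n i f := ModuleCat.ofHom (dEP X n i f)
noncomputable def dPGh (m : ℤ) : Pm X n i f ⟶ Gm X i m := ModuleCat.ofHom (dPG X n i f m)
noncomputable def dGEh (m : ℤ) : Gm X i m ⟶ Em X n i f := ModuleCat.ofHom (dGE X n i f m)
noncomputable def dGGh (m : ℤ) : Gm X i m ⟶ Gm X i (m+1) := ModuleCat.ofHom (dGG X i m)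
noncomputable def iEh : X.X n ⟶ Em X n i f := ModuleCat.ofHom (iE X n i f)
noncomputable def iPh : X.X (n+1) ⟶ Pm X n i f := ModuleCat.ofHom (iP X n i f)
noncomputable def jEh : B ⟶ Em X n i f := ModuleCat.ofHom (jE X n i f)
noncomputable def phiGh (m : ℤ) : X.X m ⟶ Gm X i m := ModuleCat.ofHom (phiG X i m)

lemma L1h (m : ℤ) : dEPh X n i f ≫ dPGh X n i f m = 0 := by exact ModuleCat.hom_ext (L1 X n i f m)
lemma L2h (m : ℤ) : dPGh X n i f m ≫ dGGh X i m = 0 := by exact ModuleCat.hom_ext (L2 X n i f m)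
lemma L3h (m : ℤ) : dGEh X n i f m ≫ dEPh X n i f = 0 := by exact ModuleCat.hom_ext (L3 X n i f m)
lemma L4h (m : ℤ) : dGGh X i m ≫ dGEh X n i f (m+1) = 0 := by exact ModuleCat.hom_ext (L4 X n i f m)
lemma L5h (m : ℤ) : dGGh X i m ≫ dGGh X i (m+1) = 0 := by exact ModuleCat.hom_ext (L5 X i m)

lemma C1h : iEh X n i f ≫ dEPh X n i f = X.d n (n+1) ≫ iPh X n i f := by exact ModuleCat.hom_ext (C1 X n i f)
lemma C2h (m : ℤ) : iPh X n i f ≫ dPGh X n i f m = X.d (n+1) m ≫ phiGh X i m := by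
  exact ModuleCat.hom_ext (C2 X n i f m)
lemma C3h (m : ℤ) : phiGh X i m ≫ dGEh X n i f m = X.d m n ≫ iEh X n i f := by
  exact ModuleCat.hom_ext (C3 X n i f m)
lemma C4h (m : ℤ) :
    phiGh X i m ≫ dGGh X i m = X.d m (m+1) ≫ phiGh X i (m+1) := by
  exact ModuleCat.hom_ext (C4 X i m)

/-- components of the extension complex. -/
noncomputable def WX (m : ℤ) : ModuleCat.{0} R :=
  if m = n then Em X n i f else if m = n + 1 then Pm X n i f else Gm X i m

lemma WX_n : WX X n i f n = Em X n i f := if_pos rfl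

lemma WX_n1 : WX X n i f (n+1) = Pm X n i f := by
  rw [WX, if_neg (by omega), if_pos rfl]

lemma WX_g (m : ℤ) (h1 : m ≠ n) (h2 : m ≠ n + 1) : WX X n i f m = Gm X i m := by
  rw [WX, if_neg h1, if_neg h2]

/-- the differential of the extension complex. -/
noncomputable def Wd (m : ℤ) : WX X n i f m ⟶ WX X n i f (m+1) :=
  if h : m = n then
    eqToHom (by rw [h, WX_n]) ≫ dEPh X n i f ≫
      eqToHom (by rw [h, WX_n1])
  else if h1 : m = n + 1 then
    eqToHom (by rw [h1, WX_n1]) ≫ dPGh X n i f (m+1) ≫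
      eqToHom (by rw [WX_g X n i f (m+1) (by omega) (by omega)])
  else if h2 : m + 1 = n then
    eqToHom (by rw [WX_g X n i f m h (by omega)]) ≫ dGEh X n i f m ≫
      eqToHom (by rw [WX, if_pos h2])
  else
    eqToHom (by rw [WX_g X n i f m h (by omega)]) ≫ dGGh X i m ≫
      eqToHom (by rw [WX_g X n i f (m+1) h2 (by omega)])

lemma Wd_comp (m : ℤ) : Wd X n i f m ≫ Wd X n i f (m+1) = 0 := by
  by_cases h : m = n
  · rw [Wd, dif_pos h, Wd, dif_neg (by omega), dif_pos (by omega)]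
    have e1 : dEPh X n i f ≫
        dPGh X n i f (m+1+1) = 0 := L1h X n i f (m+1+1)
    simp only [Category.assoc, eqToHom_trans, eqToHom_trans_assoc, eqToHom_refl, Category.id_comp]
    rw [reassoc_of% e1, zero_comp, comp_zero]
  by_cases h1 : m = n + 1
  · rw [Wd, dif_neg h, dif_pos h1, Wd, dif_neg (by omega), dif_neg (by omega),
      dif_neg (by omega)]
    have e1 : dPGh X n i f (m+1) ≫
        dGGh X i (m+1) = 0 := L2h X n i f (m+1)
    simp only [Category.assoc, eqToHom_trans, eqToHom_trans_assoc, eqToHom_refl, Category.id_comp]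
    rw [reassoc_of% e1, zero_comp, comp_zero]
  by_cases h2 : m + 1 = n
  · rw [Wd, dif_neg h, dif_neg h1, dif_pos h2, Wd, dif_pos h2]
    have e1 : dGEh X n i f m ≫
        dEPh X n i f = 0 := by exact ModuleCat.hom_ext (L3 X n i f m)
    simp only [Category.assoc, eqToHom_trans, eqToHom_trans_assoc, eqToHom_refl, Category.id_comp]
    rw [reassoc_of% e1, zero_comp, comp_zero]
  by_cases h3 : m + 1 + 1 = n
  · rw [Wd, dif_neg h, dif_neg h1, dif_neg h2, Wd, dif_neg (by omega), dif_neg (by omega),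
      dif_pos h3]
    have e1 : dGGh X i m ≫
        dGEh X n i f (m+1) = 0 := by exact ModuleCat.hom_ext (L4 X n i f m)
    simp only [Category.assoc, eqToHom_trans, eqToHom_trans_assoc, eqToHom_refl, Category.id_comp]
    rw [reassoc_of% e1, zero_comp, comp_zero]
  · rw [Wd, dif_neg h, dif_neg h1, dif_neg h2, Wd, dif_neg (by omega), dif_neg (by omega),
      dif_neg h3]
    have e1 : dGGh X i m ≫
        dGGh X i (m+1) = 0 := L5h X i m
    simp only [Category.assoc, eqToHom_trans, eqToHom_trans_assoc, eqToHom_refl, Category.id_comp]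
    rw [reassoc_of% e1, zero_comp, comp_zero]

/-- the extension complex `W`. -/
@[reducible] noncomputable def Wcx : Cx R where
  X := WX X n i f
  d a b := if h : a + 1 = b then Wd X n i f a ≫ eqToHom (by rw [h]) else 0
  shape a b hab := dif_neg hab
  d_comp_d' a b c hab hbc := by
    obtain rfl : a + 1 = b := hab
    obtain rfl : a + 1 + 1 = c := hbc
    show (dite _ _ _) ≫ (dite _ _ _) = 0
    rw [dif_pos rfl, dif_pos rfl]
    simp only [eqToHom_refl, Category.comp_id, Category.id_comp]
    exact Wd_comp X n i f a

lemma Wcx_d (m : ℤ) : (Wcx X n i f).d m (m+1) = Wd X n i f m := by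
  exact (dif_pos rfl).trans (Category.comp_id _)

/-- the chain map `X ⟶ W`. -/
noncomputable def phi : X ⟶ Wcx X n i f where
  f m :=
    if h : m = n then
      eqToHom (show X.X m = X.X n by rw [h]) ≫ iEh X n i f ≫
        eqToHom (show Em X n i f = WX X n i f m by rw [h, WX_n])
    else if h1 : m = n + 1 then
      eqToHom (show X.X m = X.X (n+1) by rw [h1]) ≫ iPh X n i f ≫
        eqToHom (show Pm X n i f = WX X n i f m by rw [h1, WX_n1])
    else phiGh X i m ≫ eqToHom (show Gm X i m = WX X n i f m by rw [WX_g X n i f m h h1])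
  comm' m m' hmm' := by
    obtain rfl : m + 1 = m' := hmm'
    rw [Wcx_d]
    beta_reduce
    by_cases h : m = n
    · subst h
      rw [dif_pos rfl, Wd, dif_pos rfl, dif_neg (by omega), dif_pos rfl]
      simp only [Category.assoc, eqToHom_trans, eqToHom_trans_assoc, eqToHom_refl,
        Category.id_comp]
      rw [reassoc_of% (C1h X m i f)]
    by_cases h1 : m = n + 1
    · subst h1
      rw [dif_neg h, dif_pos rfl, Wd, dif_neg h, dif_pos rfl, dif_neg (by omega),
        dif_neg (by omega)]
      simp only [Category.assoc, eqToHom_trans, eqToHom_trans_assoc, eqToHom_refl,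
        Category.id_comp]
      rw [reassoc_of% (C2h X n i f (n+1+1))]
    by_cases h2 : m + 1 = n
    · subst h2
      rw [dif_neg h, dif_neg h1, Wd, dif_neg h, dif_neg h1, dif_pos rfl, dif_pos rfl]
      simp only [Category.assoc, eqToHom_trans, eqToHom_trans_assoc, eqToHom_refl,
        Category.id_comp]
      rw [reassoc_of% (C3h X (m+1) i f m)]
    · rw [dif_neg h, dif_neg h1, Wd, dif_neg h, dif_neg h1, dif_neg h2,
        dif_neg (by omega : ¬ m + 1 = n), dif_neg (by omega : ¬ m + 1 = n + 1)]
      simp only [Category.assoc, eqToHom_trans, eqToHom_trans_assoc, eqToHom_refl,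
        Category.id_comp]
      rw [reassoc_of% (C4h X i m)]

lemma phi_f_n : (phi X n i f).f n = iEh X n i f ≫ eqToHom (WX_n X n i f).symm := by
  show dite _ _ _ = _
  rw [dif_pos rfl]
  simp only [eqToHom_refl, Category.id_comp]

lemma phi_f_n1 : (phi X n i f).f (n+1) = iPh X n i f ≫ eqToHom (WX_n1 X n i f).symm := by
  show dite _ _ _ = _
  rw [dif_neg (by omega), dif_pos rfl]
  simp only [eqToHom_refl, Category.id_comp]

lemma phi_f_g (m : ℤ) (h : m ≠ n) (h1 : m ≠ n + 1) :
    (phi X n i f).f m = phiGh X i m ≫ eqToHom (WX_g X n i f m h h1).symm := by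
  show dite _ _ _ = _
  rw [dif_neg h, dif_neg h1]

lemma phiG_inj (m : ℤ) : Function.Injective (phiG X i m) := by
  intro a b hab
  exact congrArg Prod.fst hab

lemma phi_inj (hi : Function.Injective i) (m : ℤ) :
    Function.Injective ((phi X n i f).f m) := by
  rw [← ModuleCat.mono_iff_injective]
  by_cases h : m = n
  · subst h
    rw [phi_f_n]
    haveI : Mono (iEh X m i f) := (ModuleCat.mono_iff_injective _).2 (iE_inj X m i f hi)
    infer_instance
  by_cases h1 : m = n + 1
  · subst h1
    rw [phi_f_n1]
    haveI : Mono (iPh X n i f) := (ModuleCat.mono_iff_injective _).2 (iP_inj X n i f hi)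
    infer_instance
  · rw [phi_f_g X n i f m h h1]
    haveI : Mono (phiGh X i m) := (ModuleCat.mono_iff_injective _).2 (phiG_inj X i m)
    infer_instance

noncomputable def cokerE_equiv :
    (↥B ⧸ LinearMap.range i.hom) ≃ₗ[R]
      (↥(Em X n i f) ⧸ LinearMap.range (iE X n i f)) := by
  set v : ↥B →ₗ[R] ↥(Em X n i f) ⧸ LinearMap.range (iE X n i f) :=
    (LinearMap.range (iE X n i f)).mkQ.comp (jE X n i f) with hv
  have hker : LinearMap.ker v = LinearMap.range i.hom := by
    ext b
    constructor
    · intro hb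
      have : jE X n i f b ∈ LinearMap.range (iE X n i f) := by
        rw [LinearMap.mem_ker, hv] at hb
        exact (Submodule.Quotient.mk_eq_zero _).1 hb
      obtain ⟨x, hx⟩ := this
      have : Submodule.Quotient.mk (p := relE X n i f) (x, 0) =
          Submodule.Quotient.mk (0, b) := hx
      rw [Submodule.Quotient.eq] at this
      obtain ⟨a, ha⟩ := this
      simp only [antiDiag_apply, Prod.mk.injEq, Prod.sub_def] at ha
      refine ⟨a, ?_⟩
      have h2 : -(i a) = 0 - b := ha.2
      simp only [zero_sub] at h2
      simpa using congrArg Neg.neg h2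
    · rintro ⟨a, rfl⟩
      rw [LinearMap.mem_ker]
      show Submodule.Quotient.mk (jE X n i f (i a)) = 0
      rw [jE_i, Submodule.Quotient.mk_eq_zero]
      exact ⟨f a, rfl⟩
  have hsurj : Function.Surjective v := by
    intro z
    obtain ⟨e, rfl⟩ := Submodule.Quotient.mk_surjective _ z
    obtain ⟨⟨x, b⟩, rfl⟩ := Submodule.Quotient.mk_surjective _ e
    refine ⟨b, ?_⟩
    show Submodule.Quotient.mk (jE X n i f b) = _
    apply (Submodule.Quotient.eq _).2
    refine ⟨-x, ?_⟩
    show Submodule.Quotient.mk ((-x, 0) : ↥(X.X n) × ↥B) =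
        Submodule.Quotient.mk ((0, b) : ↥(X.X n) × ↥B) - Submodule.Quotient.mk (x, b)
    refine Eq.trans ?_ (Submodule.Quotient.mk_sub ..)
    congr 1
    simp [Prod.ext_iff, Prod.sub_def]
  exact (Submodule.quotEquivOfEq _ _ hker.symm).trans (v.quotKerEquivOfSurjective hsurj)

noncomputable def cokerP_equiv :
    (↥(Em X n i f) ⧸ LinearMap.range (iE X n i f)) ≃ₗ[R]
      (↥(Pm X n i f) ⧸ LinearMap.range (iP X n i f)) := by
  set w : ↥(Em X n i f) →ₗ[R] ↥(Pm X n i f) ⧸ LinearMap.range (iP X n i f) :=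
    (LinearMap.range (iP X n i f)).mkQ.comp (jP X n i f) with hw
  have hker : LinearMap.ker w = LinearMap.range (iE X n i f) := by
    ext e
    constructor
    · intro hb
      have : jP X n i f e ∈ LinearMap.range (iP X n i f) := by
        rw [LinearMap.mem_ker, hw] at hb
        exact (Submodule.Quotient.mk_eq_zero _).1 hb
      obtain ⟨x, hx⟩ := this
      have : Submodule.Quotient.mk (p := relP X n i f) (x, 0) =
          Submodule.Quotient.mk (0, e) := hx
      rw [Submodule.Quotient.eq] at this
      obtain ⟨y, hy⟩ := this
      simp only [antiDiag_apply, Prod.mk.injEq, Prod.sub_def] at hy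
      refine ⟨y, ?_⟩
      have h2 : -(iE X n i f y) = 0 - e := hy.2
      simp only [zero_sub] at h2
      simpa using congrArg Neg.neg h2
    · rintro ⟨y, rfl⟩
      rw [LinearMap.mem_ker]
      show Submodule.Quotient.mk (jP X n i f (iE X n i f y)) = 0
      rw [jP_iE, Submodule.Quotient.mk_eq_zero]
      exact ⟨X.d n (n+1) y, rfl⟩
  have hsurj : Function.Surjective w := by
    intro z
    obtain ⟨p, rfl⟩ := Submodule.Quotient.mk_surjective _ z
    obtain ⟨⟨x, e⟩, rfl⟩ := Submodule.Quotient.mk_surjective _ p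
    refine ⟨e, ?_⟩
    show Submodule.Quotient.mk (jP X n i f e) = _
    apply (Submodule.Quotient.eq _).2
    refine ⟨-x, ?_⟩
    show Submodule.Quotient.mk ((-x, 0) : ↥(X.X (n+1)) × ↥(Em X n i f)) =
        Submodule.Quotient.mk ((0, e) : ↥(X.X (n+1)) × ↥(Em X n i f)) -
          Submodule.Quotient.mk (x, e)
    refine Eq.trans ?_ (Submodule.Quotient.mk_sub ..)
    congr 1
    simp [Prod.ext_iff, Prod.sub_def]
  exact (Submodule.quotEquivOfEq _ _ hker.symm).trans (w.quotKerEquivOfSurjective hsurj)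

noncomputable def cokerG_equiv (m : ℤ) :
    (↥B ⧸ LinearMap.range i.hom) ≃ₗ[R]
      (↥(Gm X i m) ⧸ LinearMap.range (phiG X i m)) := by
  set u : ↥(Qm i) →ₗ[R] ↥(Gm X i m) ⧸ LinearMap.range (phiG X i m) :=
    (LinearMap.range (phiG X i m)).mkQ.comp (LinearMap.inr R _ _) with hu
  have hinj : Function.Injective u := by
    rw [← LinearMap.ker_eq_bot, eq_bot_iff]
    intro q hq
    have : ((0, q) : ↥(X.X m) × ↥(Qm i)) ∈ LinearMap.range (phiG X i m) := by
      rw [LinearMap.mem_ker, hu] at hq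
      exact (Submodule.Quotient.mk_eq_zero _).1 hq
    obtain ⟨x, hx⟩ := this
    have : ((x, 0) : ↥(X.X m) × ↥(Qm i)) = (0, q) := hx
    simpa using (congrArg Prod.snd this).symm
  have hsurj : Function.Surjective u := by
    intro z
    obtain ⟨⟨x, q⟩, rfl⟩ := Submodule.Quotient.mk_surjective _ z
    refine ⟨q, ?_⟩
    show Submodule.Quotient.mk ((0 : ↥(X.X m)), q) = _
    apply (Submodule.Quotient.eq _).2
    refine ⟨-x, ?_⟩
    show ((-x : ↥(X.X m)), (0:↥(Qm i))) = ((0:↥(X.X m)), q) - (x, q)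
    simp [Prod.ext_iff, Prod.sub_def]
  exact LinearEquiv.ofBijective u ⟨hinj, hsurj⟩

lemma quot_range_comp_eqToHom {M N N' : ModuleCat.{0} R} (g : M ⟶ N) (e : N = N') :
    Nonempty (ModuleCat.of R (↥N ⧸ LinearMap.range g.hom) ≅
      ModuleCat.of R (↥N' ⧸ LinearMap.range (g ≫ eqToHom e).hom)) := by
  subst e
  rw [eqToHom_refl, Category.comp_id]
  exact ⟨Iso.refl _⟩

lemma coker_mem (𝒳 : Set (ModuleCat.{0} R))
    (hiso : ∀ A B : ModuleCat.{0} R, A ∈ 𝒳 → Nonempty (A ≅ B) → B ∈ 𝒳)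
    (hQ : ModuleCat.of R (↥B ⧸ LinearMap.range i.hom) ∈ 𝒳) (m : ℤ) :
    ModuleCat.of R (↥((Wcx X n i f).X m) ⧸ LinearMap.range ((phi X n i f).f m).hom) ∈ 𝒳 := by
  apply hiso _ _ hQ
  by_cases h : m = n
  · subst h
    rw [phi_f_n]
    obtain ⟨iso1⟩ := quot_range_comp_eqToHom (iEh X m i f) (WX_n X m i f).symm
    exact ⟨(cokerE_equiv X m i f).toModuleIso ≪≫ iso1⟩
  by_cases h1 : m = n + 1
  · subst h1
    rw [phi_f_n1]
    obtain ⟨iso1⟩ := quot_range_comp_eqToHom (iPh X n i f) (WX_n1 X n i f).symm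
    exact ⟨((cokerE_equiv X n i f).trans (cokerP_equiv X n i f)).toModuleIso ≪≫ iso1⟩
  · rw [phi_f_g X n i f m h h1]
    obtain ⟨iso1⟩ := quot_range_comp_eqToHom (phiGh X i m) (WX_g X n i f m h h1).symm
    exact ⟨(cokerG_equiv X i m).toModuleIso ≪≫ iso1⟩

lemma jE_i_comp : (jE X n i f).comp i.hom = (iE X n i f).comp f.hom := by
  apply LinearMap.ext
  intro a
  exact jE_i X n i f a

lemma jE_i_h : i ≫ jEh X n i f = f ≫ iEh X n i f := by exact ModuleCat.hom_ext (jE_i_comp X n i f)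

end Stmt5Proof

/-- Each component of an `𝒳`-injective complex is an `𝒳`-injective module
(for `𝒳` closed under isomorphism). -/
theorem stmt5 (𝒳 : Set (ModuleCat.{0} R))
    (hiso : ∀ A B : ModuleCat.{0} R, A ∈ 𝒳 → Nonempty (A ≅ B) → B ∈ 𝒳)
    (X : Cx R) (hX : XInjCx 𝒳 X) : ∀ n : ℤ, XInjMod 𝒳 (X.X n) := by
  intro n A B i hinj hQ f
  obtain ⟨g, hg⟩ := hX X (Stmt5Proof.Wcx X n i f) (Stmt5Proof.phi X n i f)
    (fun m => Stmt5Proof.phi_inj X n i f hinj m)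
    (fun m => Stmt5Proof.coker_mem X n i f 𝒳 hiso hQ m) (𝟙 X)
  refine ⟨Stmt5Proof.jEh X n i f ≫ eqToHom (Stmt5Proof.WX_n X n i f).symm ≫ g.f n, ?_⟩
  have h2 : (Stmt5Proof.phi X n i f).f n ≫ g.f n = 𝟙 (X.X n) := by
    rw [← HomologicalComplex.comp_f, hg, HomologicalComplex.id_f]
  rw [← Category.assoc, Stmt5Proof.jE_i_h, Category.assoc,
    ← Category.assoc (Stmt5Proof.iEh X n i f), ← Stmt5Proof.phi_f_n, h2, Category.comp_id]
end

section
/- Let X be an 𝒳-injective complex and suppose E(X)/X is an 𝒳-complex, where E(X) is the injective envelope of X in the category of complexes. Then X = E(X); in particular X is an injective, hence exact, complex. More generally, if X ⊆ Y with Y/X an 𝒳-complex, then X is a direct summand of Y. -/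
open CategoryTheory CategoryTheory.Limits

variable {R : Type} [Ring R]

/-- The contractible "disk" complex with `X.X n × X.X (n+1)` in degree `n`. -/
noncomputable def WCx (X : Cx R) : Cx R where
  X n := ModuleCat.of R (↥(X.X n) × ↥(X.X (n+1)))
  d i j :=
    if h : i + 1 = j then
      ModuleCat.ofHom (LinearMap.snd R ↥(X.X i) ↥(X.X (i+1))) ≫
        eqToHom (congrArg X.X h) ≫
        ModuleCat.ofHom (LinearMap.inl R ↥(X.X j) ↥(X.X (j+1)))
    else 0
  shape i j hij := dif_neg hij
  d_comp_d' i j k hij hjk := by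
    rw [dif_pos (show i + 1 = j from hij), dif_pos (show j + 1 = k from hjk)]
    have h0 : ModuleCat.ofHom (LinearMap.inl R ↥(X.X j) ↥(X.X (j+1))) ≫
        ModuleCat.ofHom (LinearMap.snd R ↥(X.X j) ↥(X.X (j+1))) = 0 := by
      ext x; rfl
    slice_lhs 3 4 => rw [h0]
    simp

/-- The canonical degreewise-injective chain map `X ⟶ WCx X`, `x ↦ (x, dx)`. -/
noncomputable def jW (X : Cx R) : X ⟶ WCx X where
  f n := ModuleCat.ofHom (LinearMap.prod LinearMap.id (X.d n (n+1)).hom)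
  comm' i j hij := by
    obtain rfl : j = i + 1 := hij.symm
    dsimp [WCx]
    rw [if_pos rfl]
    ext x
    · rfl
    · exact (LinearMap.congr_fun (ModuleCat.hom_ext_iff.mp (X.d_comp_d i (i+1) (i+1+1))) x).symm

lemma eqToHom_app_app {A B : ModuleCat.{0} R} (e : A = B) (e' : B = A) (x : ↥A) :
    eqToHom e' (eqToHom e x) = x := by subst e; rfl

lemma WCx_exactAt (X : Cx R) (n : ℤ) : (WCx X).ExactAt n := by
  rw [(WCx X).exactAt_iff' (n-1) n (n+1) (by simp) (by simp),
    ShortComplex.moduleCat_exact_iff]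
  intro x hx
  have hx2 : x.2 = 0 := by
    have h := congrArg Prod.fst hx
    simp [WCx] at h
    exact h
  refine ⟨(0, eqToHom (congrArg X.X (show n = n - 1 + 1 by ring)) x.1), ?_⟩
  have hd : (WCx X).d (n-1) n = ModuleCat.ofHom (LinearMap.snd R ↥(X.X (n-1)) ↥(X.X (n-1+1))) ≫
      eqToHom (congrArg X.X (show n - 1 + 1 = n by ring)) ≫
      ModuleCat.ofHom (LinearMap.inl R ↥(X.X n) ↥(X.X (n+1))) := by
    simp only [WCx]
    rw [dif_pos (show n - 1 + 1 = n by ring)]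
  show ((WCx X).d (n-1) n) _ = x
  rw [hd]
  refine Prod.ext ?_ hx2.symm
  exact eqToHom_app_app _ _ x.1

lemma exactAt_of_retract {A B : Cx R} (j : A ⟶ B) (r : B ⟶ A) (h : j ≫ r = 𝟙 A)
    (hB : ∀ n, B.ExactAt n) (n : ℤ) : A.ExactAt n := by
  rw [HomologicalComplex.exactAt_iff_isZero_homology]
  have hBz := (HomologicalComplex.exactAt_iff_isZero_homology _ _).1 (hB n)
  rw [IsZero.iff_id_eq_zero]
  have hc : HomologicalComplex.homologyMap j n ≫ HomologicalComplex.homologyMap r n = 𝟙 _ := by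
    rw [← HomologicalComplex.homologyMap_comp, h, HomologicalComplex.homologyMap_id]
  rw [← hc, hBz.eq_of_src (HomologicalComplex.homologyMap r n) 0, comp_zero]

lemma jW_mono (X : Cx R) : Mono (jW X) := by
  refine ⟨fun {Z} a b hab => ?_⟩
  ext n x
  have h : (a ≫ jW X).f n x = (b ≫ jW X).f n x := by rw [hab]
  change ((a ≫ jW X).f n x).1 = ((b ≫ jW X).f n x).1
  rw [h]

/-- If `X` is an `𝒳`-injective complex and `X ⊆ Y` with `Y/X` an `𝒳`-complex,
then `X` is a direct summand of `Y`; if moreover `Y` is an injective envelope of `X`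
(injective and essential), then `X = E(X)` is injective, hence exact. -/
theorem stmt17 (𝒳 : Set (ModuleCat.{0} R)) (X Y : Cx R) (hX : XInjCx 𝒳 X)
    (i : X ⟶ Y) (hi : ∀ n, Function.Injective (i.f n))
    (hq : ∀ n, ModuleCat.of R (↥(Y.X n) ⧸ LinearMap.range (i.f n).hom) ∈ 𝒳) :
    (∃ r : Y ⟶ X, i ≫ r = 𝟙 X) ∧
    (Injective Y → (∀ (Z : Cx R) (g : Y ⟶ Z), Mono (i ≫ g) → Mono g) →
      IsIso i ∧ Injective X ∧ ∀ n, X.ExactAt n) := by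
  obtain ⟨r, hr⟩ := hX X Y i hi hq (𝟙 X)
  refine ⟨⟨r, hr⟩, fun hYinj hess => ?_⟩
  have hmr : Mono r := hess X r (by rw [hr]; infer_instance)
  have hsr : IsSplitEpi r := ⟨⟨⟨i, hr⟩⟩⟩
  have her : Epi r := hsr.epi
  have hir : IsIso r := isIso_of_mono_of_epi r
  have hii : IsIso i := by
    have h : i = inv r := by
      rw [← Category.comp_id i, ← IsIso.hom_inv_id r, ← Category.assoc, hr, Category.id_comp]
    rw [h]; infer_instance
  have hXinj : Injective X := Injective.of_iso (asIso i).symm hYinj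
  refine ⟨hii, hXinj, ?_⟩
  haveI := jW_mono X
  exact exactAt_of_retract (jW X) (Injective.factorThru (𝟙 X) (jW X))
    (Injective.comp_factorThru _ _) (WCx_exactAt X)
end
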